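/- Let S be a countable polymer set with symmetric reflexive incompatibility relation and ẑ : S → [0,∞). For a finite set A ⊆ S and X ∈ A define 𝔛_X(A) = Σ_{Δ ⊆ A cluster, X ∈ Δ} Π_{Y ∈ Δ} ẑ(Y). Then 𝔛_X(A) ≤ ẑ(X) · exp[ Σ_{Y ∈ A∖{X}, Y ≁ X} 𝔛_Y(A∖{X}) ]. -/

import Mathlib

open scoped Classical

/-- A nonempty finite set of polymers is a cluster if it admits no decomposition into
two nonempty disjoint elementwise compatible parts. -/
def IsCluster {S : Type*} (incomp : S → S → Prop) (Δ : Finset S) : Prop :=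
  Δ.Nonempty ∧
    ¬ ∃ Δ₁ Δ₂ : Finset S, Δ₁.Nonempty ∧ Δ₂.Nonempty ∧ Disjoint Δ₁ Δ₂ ∧
      (∀ X, X ∈ Δ ↔ (X ∈ Δ₁ ∨ X ∈ Δ₂)) ∧
      ∀ X ∈ Δ₁, ∀ Y ∈ Δ₂, ¬ incomp X Y

set_option linter.unusedVariables false

section aux
variable {S : Type*} (incomp : S → S → Prop)

/-- reachability within `Γ` along the incompatibility graph -/
def reach (Γ : Finset S) : S → S → Prop :=
  Relation.ReflTransGen (fun x y => x ∈ Γ ∧ y ∈ Γ ∧ incomp x y)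

/-- connected component of `a` inside `Γ` -/
noncomputable def pcomp (Γ : Finset S) (a : S) : Finset S :=
  Γ.filter (reach incomp Γ a)

variable {incomp}

lemma reach_symm (hsym : ∀ X Y, incomp X Y → incomp Y X) {Γ : Finset S} {a b : S} (h : reach incomp Γ a b) :
    reach incomp Γ b a :=
  letI : Std.Symm (fun x y : S => x ∈ Γ ∧ y ∈ Γ ∧ incomp x y) :=
    ⟨fun x y ⟨hx, hy, hxy⟩ => ⟨hy, hx, hsym _ _ hxy⟩⟩
  Std.Symm.symm (r := Relation.ReflTransGen (fun x y : S => x ∈ Γ ∧ y ∈ Γ ∧ incomp x y)) _ _ h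

lemma mem_pcomp_self {Γ : Finset S} {a : S} (ha : a ∈ Γ) : a ∈ pcomp incomp Γ a := by
  exact Finset.mem_filter.2 ⟨ha, Relation.ReflTransGen.refl⟩

lemma pcomp_subset (Γ : Finset S) (a : S) : pcomp incomp Γ a ⊆ Γ :=
  Finset.filter_subset _ _

lemma mem_pcomp_reach {Γ : Finset S} {a b : S} (h : b ∈ pcomp incomp Γ a) :
    reach incomp Γ a b := (Finset.mem_filter.1 h).2

lemma pcomp_eq_of_mem (hsym : ∀ X Y, incomp X Y → incomp Y X) {Γ : Finset S} {a b : S} (h : b ∈ pcomp incomp Γ a) :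
    pcomp incomp Γ a = pcomp incomp Γ b := by
  have hab : reach incomp Γ a b := mem_pcomp_reach h
  ext z
  simp only [pcomp, Finset.mem_filter, and_congr_right_iff]
  intro _
  constructor
  · intro haz
    exact Relation.ReflTransGen.trans (reach_symm hsym hab) haz
  · intro hbz
    exact Relation.ReflTransGen.trans hab hbz

lemma pcomp_isCluster (hsym : ∀ X Y, incomp X Y → incomp Y X) {Γ : Finset S} {a : S} (ha : a ∈ Γ) :
    IsCluster incomp (pcomp incomp Γ a) := by
  refine ⟨⟨a, mem_pcomp_self ha⟩, ?_⟩
  rintro ⟨Δ₁, Δ₂, h1, h2, hdisj, hmem, hcompat⟩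
  -- both-ways compatibility
  have hcompat' : ∀ u v, (u ∈ Δ₁ ∧ v ∈ Δ₂) ∨ (u ∈ Δ₂ ∧ v ∈ Δ₁) → ¬ incomp u v := by
    rintro u v (⟨hu, hv⟩ | ⟨hu, hv⟩) huv
    · exact hcompat u hu v hv huv
    · exact hcompat v hv u hu (hsym _ _ huv)
  -- a is in one of the parts; all of pcomp is then in that part
  have key : ∀ (D E : Finset S), a ∈ D →
      (∀ z, z ∈ pcomp incomp Γ a ↔ (z ∈ D ∨ z ∈ E)) →
      (∀ u v, u ∈ D → v ∈ E → ¬ incomp u v) →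
      ∀ c, reach incomp Γ a c → c ∈ D := by
    intro D E haD hm hc c hreach
    induction hreach with
    | refl => exact haD
    | tail hab hstep ih =>
        rename_i b c
        obtain ⟨hbΓ, hcΓ, hbc⟩ := hstep
        have hb : b ∈ D := ih
        have hcP : c ∈ pcomp incomp Γ a :=
          Finset.mem_filter.2 ⟨hcΓ, Relation.ReflTransGen.tail hab ⟨hbΓ, hcΓ, hbc⟩⟩
        rcases (hm c).1 hcP with h | h
        · exact h
        · exact absurd hbc (hc b c hb h)
  have haP : a ∈ pcomp incomp Γ a := mem_pcomp_self ha
  rcases (hmem a).1 haP with haD | haD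
  · obtain ⟨y, hy⟩ := h2
    have hyP : y ∈ pcomp incomp Γ a := (hmem y).2 (Or.inr hy)
    have : y ∈ Δ₁ := key Δ₁ Δ₂ haD hmem (fun u v hu hv => hcompat u hu v hv)
      y (mem_pcomp_reach hyP)
    exact (Finset.disjoint_left.1 hdisj this) hy
  · obtain ⟨y, hy⟩ := h1
    have hyP : y ∈ pcomp incomp Γ a := (hmem y).2 (Or.inl hy)
    have : y ∈ Δ₂ := key Δ₂ Δ₁ haD (fun z => (hmem z).trans or_comm)
      (fun u v hu hv huv => hcompat v hv u hu (hsym _ _ huv))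
      y (mem_pcomp_reach hyP)
    exact (Finset.disjoint_left.1 hdisj hy) this

/-- every component of `Δ.erase X` in a cluster `Δ ∋ X` contains a polymer
incompatible with `X` -/
lemma pcomp_meets {Δ : Finset S} (hΔ : IsCluster incomp Δ) {X : S} (hX : X ∈ Δ)
    {y : S} (hy : y ∈ Δ.erase X) :
    ∃ z ∈ pcomp incomp (Δ.erase X) y, incomp z X := by
  by_contra hcon
  push_neg at hcon
  set Γ := Δ.erase X
  set C := pcomp incomp Γ y with hC
  have hCΓ : C ⊆ Γ := pcomp_subset Γ y
  apply hΔ.2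
  refine ⟨C, Δ \ C, ⟨y, mem_pcomp_self hy⟩, ⟨X, ?_⟩, Finset.disjoint_sdiff, ?_, ?_⟩
  · refine Finset.mem_sdiff.2 ⟨hX, fun hXC => ?_⟩
    exact (Finset.notMem_erase X Δ) (hCΓ hXC)
  · intro z
    constructor
    · intro hz
      by_cases h : z ∈ C
      · exact Or.inl h
      · exact Or.inr (Finset.mem_sdiff.2 ⟨hz, h⟩)
    · rintro (h | h)
      · exact (Finset.erase_subset X Δ) (hCΓ h)
      · exact (Finset.mem_sdiff.1 h).1
  · intro u hu v hv huv
    obtain ⟨hvΔ, hvC⟩ := Finset.mem_sdiff.1 hv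
    by_cases hvX : v = X
    · exact hcon u hu (hvX ▸ huv)
    · have hvΓ : v ∈ Γ := Finset.mem_erase.2 ⟨hvX, hvΔ⟩
      have huΓ : u ∈ Γ := hCΓ hu
      have : v ∈ C := Finset.mem_filter.2
        ⟨hvΓ, Relation.ReflTransGen.tail (mem_pcomp_reach hu) ⟨huΓ, hvΓ, huv⟩⟩
      exact hvC this

end aux


lemma sum_comp_le_of_inj {α β : Type*} [DecidableEq β] (s : Finset α) (t : Finset β)
    (g : α → β) (hg : ∀ a ∈ s, g a ∈ t)
    (hinj : ∀ a ∈ s, ∀ b ∈ s, g a = g b → a = b)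
    (f : β → ℝ) (hf : ∀ b ∈ t, 0 ≤ f b) :
    ∑ a ∈ s, f (g a) ≤ ∑ b ∈ t, f b := by
  rw [← Finset.sum_image hinj]
  exact Finset.sum_le_sum_of_subset_of_nonneg (Finset.image_subset_iff.2 hg)
    (fun b hb _ => hf b hb)

/-- `𝔛_X(A)`: the sum over clusters `Δ ⊆ A` containing `X` of `Π_{Y ∈ Δ} ẑ(Y)`. -/
noncomputable def clusterSum {S : Type*} (incomp : S → S → Prop) (zhat : S → ℝ)
    (A : Finset S) (X : S) : ℝ :=
  ∑ Δ ∈ A.powerset.filter (fun Δ => IsCluster incomp Δ ∧ X ∈ Δ), ∏ Y ∈ Δ, zhat Y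

set_option maxHeartbeats 2000000 in
/-- the recurrence inequality
`𝔛_X(A) ≤ ẑ(X)·exp[Σ_{Y ∈ A∖{X}, Y ≁ X} 𝔛_Y(A∖{X})]`. -/
theorem statement14 {S : Type*} (incomp : S → S → Prop)
    (hsym : ∀ X Y, incomp X Y → incomp Y X) (hrefl : ∀ X, incomp X X)
    (zhat : S → ℝ) (hz : ∀ X, 0 ≤ zhat X) (A : Finset S) (X : S) (hX : X ∈ A) :
    clusterSum incomp zhat A X ≤
      zhat X * Real.exp (∑ Y ∈ (A.erase X).filter (fun Y => incomp Y X),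
        clusterSum incomp zhat (A.erase X) Y) := by
  classical
  set B := A.erase X with hB
  set T := B.filter (fun Y => incomp Y X) with hTdef
  set w : Finset S → ℝ := fun C => ∏ Z ∈ C, zhat Z with hwdef
  have hw0 : ∀ C, 0 ≤ w C := fun C => Finset.prod_nonneg (fun _ _ => hz _)
  set opts : S → Finset (Finset S) := fun Y =>
    insert ∅ ((B.powerset).filter (fun C => IsCluster incomp C ∧ Y ∈ C)) with hoptsdef
  have hcs0 : ∀ Y, 0 ≤ clusterSum incomp zhat B Y := by
    intro Y
    exact Finset.sum_nonneg (fun Δ _ => Finset.prod_nonneg (fun _ _ => hz _))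
  have hsum_opts : ∀ Y, ∑ C ∈ opts Y, w C = 1 + clusterSum incomp zhat B Y := by
    intro Y
    rw [hoptsdef]
    rw [Finset.sum_insert]
    · simp [hwdef, clusterSum]
    · simp only [Finset.mem_filter]
      rintro ⟨-, -, h⟩
      exact absurd h (Finset.notMem_empty Y)
  -- Step 2 : product-to-exp
  have step2 : zhat X * ∏ Y ∈ T, (1 + clusterSum incomp zhat B Y)
      ≤ zhat X * Real.exp (∑ Y ∈ T, clusterSum incomp zhat B Y) := by
    apply mul_le_mul_of_nonneg_left _ (hz X)
    rw [Real.exp_sum]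
    apply Finset.prod_le_prod
    · intro Y _
      have := hcs0 Y; linarith
    · intro Y _
      have := Real.add_one_le_exp (clusterSum incomp zhat B Y); linarith
  refine le_trans ?_ step2
  -- Main combinatorial inequality
  set D := A.powerset.filter (fun Δ => IsCluster incomp Δ ∧ X ∈ Δ) with hDdef
  set rep : Finset S → S := fun C =>
    if h : (C.filter (fun z => incomp z X)).Nonempty then h.choose else X with hrepdef
  set fΔ : Finset S → S → Finset S := fun Δ Y =>
    if Y ∈ Δ.erase X ∧ rep (pcomp incomp (Δ.erase X) Y) = Y
    then pcomp incomp (Δ.erase X) Y else ∅ with hfdef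
  -- basic facts for Δ ∈ D
  have hD : ∀ Δ ∈ D, Δ ⊆ A ∧ IsCluster incomp Δ ∧ X ∈ Δ := by
    intro Δ hΔ
    simp only [hDdef, Finset.mem_filter, Finset.mem_powerset] at hΔ
    exact ⟨hΔ.1, hΔ.2.1, hΔ.2.2⟩
  have hΓB : ∀ Δ ∈ D, Δ.erase X ⊆ B := by
    intro Δ hΔ
    exact Finset.erase_subset_erase X (hD Δ hΔ).1
  -- (b) decomposition of Δ.erase X into the selected components
  have hbu : ∀ Δ ∈ D, Δ.erase X = T.biUnion (fΔ Δ) := by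
    intro Δ hΔ
    obtain ⟨hΔA, hΔcl, hΔX⟩ := hD Δ hΔ
    set Γ := Δ.erase X with hΓ
    apply Finset.Subset.antisymm
    · intro z hz'
      have hmeet := pcomp_meets hΔcl hΔX hz'
      set C := pcomp incomp Γ z with hC
      have hne : (C.filter (fun u => incomp u X)).Nonempty := by
        obtain ⟨u, hu, huX⟩ := hmeet
        exact ⟨u, Finset.mem_filter.2 ⟨hu, huX⟩⟩
      have hrepC : rep C = hne.choose := by rw [hrepdef]; exact dif_pos hne
      set Y₀ := rep C with hY₀
      have hY₀mem : Y₀ ∈ C ∧ incomp Y₀ X := by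
        have h := hne.choose_spec
        rw [Finset.mem_filter] at h
        rw [← hrepC] at h
        exact h
      have hY₀Γ : Y₀ ∈ Γ := pcomp_subset Γ z hY₀mem.1
      have hCeq : pcomp incomp Γ Y₀ = C := (pcomp_eq_of_mem hsym hY₀mem.1).symm
      have hY₀T : Y₀ ∈ T := by
        rw [hTdef, Finset.mem_filter]
        exact ⟨hΓB Δ hΔ hY₀Γ, hY₀mem.2⟩
      refine Finset.mem_biUnion.2 ⟨Y₀, hY₀T, ?_⟩
      rw [hfdef]
      simp only
      rw [if_pos ⟨hY₀Γ, by rw [hCeq]⟩, hCeq]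
      exact mem_pcomp_self hz'
    · intro z hz'
      obtain ⟨Y, hY, hzY⟩ := Finset.mem_biUnion.1 hz'
      rw [hfdef] at hzY
      simp only at hzY
      split_ifs at hzY with hc
      · exact pcomp_subset Γ Y hzY
      · exact absurd hzY (Finset.notMem_empty z)
  -- pairwise disjointness of the pieces
  have hdisj : ∀ Δ ∈ D, (↑T : Set S).PairwiseDisjoint (fΔ Δ) := by
    intro Δ _ Y hY Y' hY' hne
    simp only [Function.onFun]
    rw [Finset.disjoint_left]
    intro u hu hu'
    rw [hfdef] at hu hu'
    simp only at hu hu'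
    split_ifs at hu with h1
    · split_ifs at hu' with h2
      · have e1 : pcomp incomp (Δ.erase X) Y = pcomp incomp (Δ.erase X) u :=
          pcomp_eq_of_mem hsym hu
        have e2 : pcomp incomp (Δ.erase X) Y' = pcomp incomp (Δ.erase X) u :=
          pcomp_eq_of_mem hsym hu'
        have : Y = Y' := by rw [← h1.2, ← h2.2, e1, e2]
        exact hne this
      · exact absurd hu' (Finset.notMem_empty u)
    · exact absurd hu (Finset.notMem_empty u)
  -- (c) weight factorization
  have hwfac : ∀ Δ ∈ D, w Δ = zhat X * ∏ Y ∈ T, w (fΔ Δ Y) := by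
    intro Δ hΔ
    obtain ⟨hΔA, hΔcl, hΔX⟩ := hD Δ hΔ
    have h1 : w Δ = zhat X * w (Δ.erase X) := by
      rw [hwdef]
      exact (Finset.mul_prod_erase Δ zhat hΔX).symm
    rw [h1]
    congr 1
    rw [hwdef]
    simp only
    rw [hbu Δ hΔ, Finset.prod_biUnion (hdisj Δ hΔ)]
  -- (a) each piece is in opts
  have hmem_opts : ∀ Δ ∈ D, ∀ Y ∈ T, fΔ Δ Y ∈ opts Y := by
    intro Δ hΔ Y hY
    rw [hfdef, hoptsdef]
    simp only
    split_ifs with hc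
    · apply Finset.mem_insert_of_mem
      rw [Finset.mem_filter, Finset.mem_powerset]
      exact ⟨(pcomp_subset _ _).trans (hΓB Δ hΔ), pcomp_isCluster hsym hc.1,
        mem_pcomp_self hc.1⟩
    · exact Finset.mem_insert_self _ _
  -- (d) injectivity
  set F : Finset S → (∀ Y ∈ T, Finset S) := fun Δ => fun Y _ => fΔ Δ Y with hFdef
  have hinj : ∀ Δ₁ ∈ D, ∀ Δ₂ ∈ D, F Δ₁ = F Δ₂ → Δ₁ = Δ₂ := by
    intro Δ₁ h1 Δ₂ h2 hF
    have hpt : ∀ Y ∈ T, fΔ Δ₁ Y = fΔ Δ₂ Y := by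
      intro Y hY
      have := congrFun (congrFun hF Y) hY
      exact this
    have e1 : Δ₁ = insert X (Δ₁.erase X) := (Finset.insert_erase (hD Δ₁ h1).2.2).symm
    have e2 : Δ₂ = insert X (Δ₂.erase X) := (Finset.insert_erase (hD Δ₂ h2).2.2).symm
    rw [e1, e2, hbu Δ₁ h1, hbu Δ₂ h2]
    congr 1
    exact Finset.biUnion_congr rfl hpt
  -- final chain
  have lhs_eq : clusterSum incomp zhat A X = ∑ Δ ∈ D, w Δ := by
    unfold clusterSum
    rfl
  rw [lhs_eq]
  have e3 : ∑ Δ ∈ D, w Δ = zhat X * ∑ Δ ∈ D, ∏ Y ∈ T, w (fΔ Δ Y) := by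
    rw [Finset.mul_sum]
    exact Finset.sum_congr rfl hwfac
  rw [e3]
  apply mul_le_mul_of_nonneg_left _ (hz X)
  have e4 : ∀ Δ ∈ D, ∏ Y ∈ T, w (fΔ Δ Y) = ∏ Y ∈ T.attach, w (F Δ Y.1 Y.2) := by
    intro Δ _
    rw [hFdef]
    exact (Finset.prod_attach T fun Y => w (fΔ Δ Y)).symm
  calc ∑ Δ ∈ D, ∏ Y ∈ T, w (fΔ Δ Y)
      = ∑ Δ ∈ D, ∏ Y ∈ T.attach, w (F Δ Y.1 Y.2) := Finset.sum_congr rfl e4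
    _ ≤ ∑ p ∈ T.pi opts, ∏ Y ∈ T.attach, w (p Y.1 Y.2) := by
        apply sum_comp_le_of_inj D (T.pi opts) F
          (fun Δ hΔ => Finset.mem_pi.2 (fun Y hY => hmem_opts Δ hΔ Y hY)) hinj
          (fun p => ∏ Y ∈ T.attach, w (p Y.1 Y.2))
          (fun p _ => Finset.prod_nonneg (fun Y _ => hw0 _))
    _ = ∏ Y ∈ T, ∑ C ∈ opts Y, w C := (Finset.prod_sum T opts (fun _ C => w C)).symm
    _ = ∏ Y ∈ T, (1 + clusterSum incomp zhat B Y) :=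
        Finset.prod_congr rfl (fun Y _ => hsum_opts Y)
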